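/- Let (X, μ) be a σ-finite measure space and let p, q : X → [0,∞) be measurable with ∫ p dμ = ∫ q dμ = 1. Then for every measurable function D : X → (0,1), assuming all integrals below are well defined, ∫ p(x) log D(x) dμ(x) + ∫ q(x) log(1 − D(x)) dμ(x) ≤ ∫_{p+q>0} p(x) log (p(x)/(p(x)+q(x))) dμ(x) + ∫_{p+q>0} q(x) log (q(x)/(p(x)+q(x))) dμ(x), and the bound is attained by D*(x) = p(x)/(p(x)+q(x)) on the set where p(x)+q(x) > 0. (Here 0·log 0 is interpreted as 0.) -/

import Mathlib

open MeasureTheory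

lemma key_pt (a b t : ℝ) (ha : 0 ≤ a) (hb : 0 ≤ b) (ht0 : 0 < t) (ht1 : t < 1)
    (hab : 0 < a + b) :
    a * Real.log t + b * Real.log (1 - t)
      ≤ a * Real.log (a / (a + b)) + b * Real.log (b / (a + b)) := by
  have key : ∀ c s : ℝ, 0 ≤ c → 0 < s →
      c * Real.log s ≤ c * Real.log (c / (a + b)) + (s * (a + b) - c) := by
    intro c s hc hs
    rcases eq_or_lt_of_le hc with h | h
    · simp [← h]
      positivity
    · have hpos : 0 < s * (a + b) / c := by positivity
      have hlog : Real.log (s * (a + b) / c) ≤ s * (a + b) / c - 1 :=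
        Real.log_le_sub_one_of_pos hpos
      have heq : Real.log (s * (a + b) / c) = Real.log s - Real.log (c / (a + b)) := by
        rw [Real.log_div (by positivity) (ne_of_gt h), Real.log_mul (ne_of_gt hs) (ne_of_gt hab),
          Real.log_div (ne_of_gt h) (ne_of_gt hab)]
        ring
      rw [heq] at hlog
      have := mul_le_mul_of_nonneg_left hlog (le_of_lt h)
      have hcs : c * (s * (a + b) / c - 1) = s * (a + b) - c := by
        field_simp
      nlinarith
  have h1 := key a t ha ht0
  have h2 := key b (1 - t) hb (by linarith)
  nlinarith

theorem optimal_discriminator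
    {X : Type*} [MeasurableSpace X] (μ : Measure X) [SigmaFinite μ]
    (p q : X → ℝ) (hpm : Measurable p) (hqm : Measurable q)
    (hp0 : ∀ x, 0 ≤ p x) (hq0 : ∀ x, 0 ≤ q x)
    (hpint : Integrable p μ) (hqint : Integrable q μ)
    (hp1 : ∫ x, p x ∂μ = 1) (hq1 : ∫ x, q x ∂μ = 1)
    (D : X → ℝ) (hDm : Measurable D)
    (hD0 : ∀ x, 0 < D x) (hD1 : ∀ x, D x < 1)
    (hIntD1 : Integrable (fun x => p x * Real.log (D x)) μ)
    (hIntD2 : Integrable (fun x => q x * Real.log (1 - D x)) μ)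
    (hIntS1 : IntegrableOn (fun x => p x * Real.log (p x / (p x + q x)))
      {x | 0 < p x + q x} μ)
    (hIntS2 : IntegrableOn (fun x => q x * Real.log (q x / (p x + q x)))
      {x | 0 < p x + q x} μ) :
    (∫ x, p x * Real.log (D x) ∂μ) + (∫ x, q x * Real.log (1 - D x) ∂μ)
      ≤ (∫ x in {x | 0 < p x + q x}, p x * Real.log (p x / (p x + q x)) ∂μ)
        + (∫ x in {x | 0 < p x + q x}, q x * Real.log (q x / (p x + q x)) ∂μ) ∧
    (∫ x, p x * Real.log (p x / (p x + q x)) ∂μ)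
        + (∫ x, q x * Real.log (1 - p x / (p x + q x)) ∂μ)
      = (∫ x in {x | 0 < p x + q x}, p x * Real.log (p x / (p x + q x)) ∂μ)
        + (∫ x in {x | 0 < p x + q x}, q x * Real.log (q x / (p x + q x)) ∂μ) := by
  set s : Set X := {x | 0 < p x + q x} with hs
  have hsm : MeasurableSet s := measurableSet_lt measurable_const (hpm.add hqm)
  -- off s, p x = 0 and q x = 0
  have hzero : ∀ x ∉ s, p x = 0 ∧ q x = 0 := by
    intro x hx
    simp only [hs, Set.mem_setOf_eq, not_lt] at hx
    constructor <;> nlinarith [hp0 x, hq0 x]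
  -- convert LHS integrals to set integrals
  have eqD1 : ∫ x, p x * Real.log (D x) ∂μ = ∫ x in s, p x * Real.log (D x) ∂μ :=
    (setIntegral_eq_integral_of_forall_compl_eq_zero
      (fun x hx => by rw [(hzero x hx).1]; ring)).symm
  have eqD2 : ∫ x, q x * Real.log (1 - D x) ∂μ = ∫ x in s, q x * Real.log (1 - D x) ∂μ :=
    (setIntegral_eq_integral_of_forall_compl_eq_zero
      (fun x hx => by rw [(hzero x hx).2]; ring)).symm
  constructor
  · rw [eqD1, eqD2, ← integral_add (hIntD1.integrableOn) (hIntD2.integrableOn),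
      ← integral_add hIntS1 hIntS2]
    apply setIntegral_mono_on ((hIntD1.integrableOn).add (hIntD2.integrableOn))
      (hIntS1.add hIntS2) hsm
    intro x hx
    exact key_pt (p x) (q x) (D x) (hp0 x) (hq0 x) (hD0 x) (hD1 x) hx
  · have e1 : ∫ x, p x * Real.log (p x / (p x + q x)) ∂μ
        = ∫ x in s, p x * Real.log (p x / (p x + q x)) ∂μ :=
      (setIntegral_eq_integral_of_forall_compl_eq_zero
        (fun x hx => by rw [(hzero x hx).1]; ring)).symm
    have e2 : (fun x => q x * Real.log (1 - p x / (p x + q x)))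
        = fun x => q x * Real.log (q x / (p x + q x)) := by
      funext x
      by_cases hx : 0 < p x + q x
      · have : 1 - p x / (p x + q x) = q x / (p x + q x) := by
          field_simp
          ring
        rw [this]
      · obtain ⟨h1, h2⟩ := hzero x hx
        simp [h1, h2]
    have e3 : ∫ x, q x * Real.log (q x / (p x + q x)) ∂μ
        = ∫ x in s, q x * Real.log (q x / (p x + q x)) ∂μ :=
      (setIntegral_eq_integral_of_forall_compl_eq_zero
        (fun x hx => by rw [(hzero x hx).2]; ring)).symm
    rw [e1, e2, e3]
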